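/- For a tensor T ∈ V₁⊗V₂⊗V₃, the tensor rank of T equals the minimum number of pure tensors in V₂⊗V₃ whose linear span contains the first contraction space C₁(T) = {f(T) : f ∈ V₁^∨}. -/

import Mathlib

open scoped TensorProduct

/-- The tensor rank of a tensor in `V₁ ⊗ V₂ ⊗ V₃`: the minimum number `R` such that the
tensor is a sum of `R` pure tensors. -/
noncomputable def tensorRank3 {F : Type*} [Field F] {V₁ V₂ V₃ : Type*}
    [AddCommGroup V₁] [Module F V₁] [AddCommGroup V₂] [Module F V₂]
    [AddCommGroup V₃] [Module F V₃] (T : V₁ ⊗[F] (V₂ ⊗[F] V₃)) : ℕ :=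
  sInf {R | ∃ u : Fin R → V₁ × V₂ × V₃,
    T = ∑ j, (u j).1 ⊗ₜ[F] ((u j).2.1 ⊗ₜ[F] (u j).2.2)}

/-- The contraction `f(T) ∈ V₂ ⊗ V₃` of `T ∈ V₁ ⊗ V₂ ⊗ V₃` by `f ∈ V₁^∨`, defined on pure
tensors by `f(v₁ ⊗ v₂ ⊗ v₃) = f(v₁) • (v₂ ⊗ v₃)` and extended linearly. -/
noncomputable def contr1 {F : Type*} [Field F] {V₁ V₂ V₃ : Type*}
    [AddCommGroup V₁] [Module F V₁] [AddCommGroup V₂] [Module F V₂]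
    [AddCommGroup V₃] [Module F V₃] (f : Module.Dual F V₁) (T : V₁ ⊗[F] (V₂ ⊗[F] V₃)) :
    V₂ ⊗[F] V₃ :=
  TensorProduct.lid F (V₂ ⊗[F] V₃) (TensorProduct.map f LinearMap.id T)


private lemma contr1_decomp {F : Type*} [Field F] {V₁ V₂ V₃ : Type*}
    [AddCommGroup V₁] [Module F V₁] [AddCommGroup V₂] [Module F V₂]
    [AddCommGroup V₃] [Module F V₃] [FiniteDimensional F V₁]
    (e : Module.Basis (Fin (Module.finrank F V₁)) F V₁) (T : V₁ ⊗[F] (V₂ ⊗[F] V₃)) :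
    T = ∑ i, e i ⊗ₜ[F] contr1 (e.coord i) T := by
  induction T using TensorProduct.induction_on with
  | zero => simp [contr1]
  | tmul a b =>
    have h : ∀ i, (e i) ⊗ₜ[F] contr1 (e.coord i) (a ⊗ₜ[F] b)
        = (e.repr a i • e i) ⊗ₜ[F] b := by
      intro i
      simp [contr1, TensorProduct.map_tmul, TensorProduct.tmul_smul,
        TensorProduct.smul_tmul, Module.Basis.coord_apply]
    rw [Finset.sum_congr rfl (fun i _ => h i), ← TensorProduct.sum_tmul,
      e.sum_repr a]
  | add x y hx hy =>
    have h : ∀ i, contr1 (e.coord i) (x + y)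
        = contr1 (e.coord i) x + contr1 (e.coord i) y := by
      intro i; simp [contr1]
    simp only [h, TensorProduct.tmul_add, Finset.sum_add_distrib]
    rw [← hx, ← hy]

/-- For `T ∈ V₁ ⊗ V₂ ⊗ V₃`, the tensor rank of `T` equals the minimum number of
pure tensors in `V₂ ⊗ V₃` whose linear span contains the first contraction space
`C₁(T) = {f(T) : f ∈ V₁^∨}`. -/
theorem stmt_1 {F : Type*} [Field F] {V₁ V₂ V₃ : Type*}
    [AddCommGroup V₁] [Module F V₁] [AddCommGroup V₂] [Module F V₂]
    [AddCommGroup V₃] [Module F V₃] [FiniteDimensional F V₁] [FiniteDimensional F V₂]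
    [FiniteDimensional F V₃] (T : V₁ ⊗[F] (V₂ ⊗[F] V₃)) :
    tensorRank3 T = sInf {R | ∃ w : Fin R → V₂ × V₃,
      {S | ∃ f : Module.Dual F V₁, S = contr1 f T} ⊆
        ↑(Submodule.span F (Set.range fun j => (w j).1 ⊗ₜ[F] (w j).2))} := by
  have hset : {R | ∃ u : Fin R → V₁ × V₂ × V₃,
      T = ∑ j, (u j).1 ⊗ₜ[F] ((u j).2.1 ⊗ₜ[F] (u j).2.2)} =
      {R | ∃ w : Fin R → V₂ × V₃,
        {S | ∃ f : Module.Dual F V₁, S = contr1 f T} ⊆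
          ↑(Submodule.span F (Set.range fun j => (w j).1 ⊗ₜ[F] (w j).2))} := by
    ext R
    constructor
    · rintro ⟨u, hu⟩
      refine ⟨fun j => (u j).2, ?_⟩
      rintro S ⟨f, rfl⟩
      rw [hu]
      simp only [contr1, map_sum]
      refine Submodule.sum_mem _ fun j _ => ?_
      have h1 : (TensorProduct.lid F (V₂ ⊗[F] V₃))
          ((TensorProduct.map f LinearMap.id)
            ((u j).1 ⊗ₜ[F] ((u j).2.1 ⊗ₜ[F] (u j).2.2)))
          = f (u j).1 • ((u j).2.1 ⊗ₜ[F] (u j).2.2) := by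
        simp [TensorProduct.map_tmul]
      rw [h1]
      exact Submodule.smul_mem _ _ (Submodule.subset_span ⟨j, rfl⟩)
    · rintro ⟨w, hw⟩
      set e := Module.finBasis F V₁ with he
      have hT : T = ∑ i, e i ⊗ₜ[F] contr1 (e.coord i) T := contr1_decomp e T
      have hmem : ∀ i, contr1 (e.coord i) T ∈
          Submodule.span F (Set.range fun j => (w j).1 ⊗ₜ[F] (w j).2) :=
        fun i => hw ⟨e.coord i, rfl⟩
      have hc : ∀ i, ∃ c : Fin R → F,
          (∑ j, c j • (w j).1 ⊗ₜ[F] (w j).2) = contr1 (e.coord i) T := by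
        intro i
        exact (Submodule.mem_span_range_iff_exists_fun F).mp (hmem i)
      choose c hcc using hc
      refine ⟨fun j => (∑ i, c i j • e i, (w j).1, (w j).2), ?_⟩
      calc T = ∑ i, e i ⊗ₜ[F] contr1 (e.coord i) T := hT
        _ = ∑ i, ∑ j, c i j • (e i ⊗ₜ[F] ((w j).1 ⊗ₜ[F] (w j).2)) := by
            refine Finset.sum_congr rfl fun i _ => ?_
            rw [← hcc i, TensorProduct.tmul_sum]
            exact Finset.sum_congr rfl fun j _ =>
              (TensorProduct.tmul_smul _ _ _)
        _ = ∑ j, ∑ i, c i j • (e i ⊗ₜ[F] ((w j).1 ⊗ₜ[F] (w j).2)) :=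
            Finset.sum_comm
        _ = ∑ j, (∑ i, c i j • e i) ⊗ₜ[F] ((w j).1 ⊗ₜ[F] (w j).2) := by
            refine Finset.sum_congr rfl fun j _ => ?_
            rw [TensorProduct.sum_tmul]
            exact Finset.sum_congr rfl fun i _ =>
              (TensorProduct.smul_tmul' _ _ _).symm
  unfold tensorRank3
  rw [hset]
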